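/- arXiv:math/0102215 — 3 statements merged into one kernel-verified Lean document; each statement's English description precedes it below -/
import Mathlib

section
/- Let A and B be nilpotent groups of class at most two, and let D be a common subgroup of A and B (given by injective homomorphisms ι : D → A and κ : D → B) with D co-central in B. If there exists a nilpotent group G of class at most two with injective homomorphisms f : A → G and g : B → G satisfying f ∘ ι = g ∘ κ, then for every integer q > 0, every a ∈ A such that a^q lies in the subgroup generated by the commutator subgroup [A,A] and ι(D), and every z ∈ Z(B) and d ∈ D with κ(d) = z^q, one has ⁅a, ι(d)⁆ = 1 in A. -/
universe u

open scoped commutatorElement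

section Aux

variable {G : Type*} [Group G]

lemma comm_mul_left (hG : commutator G ≤ Subgroup.center G) (y x z : G) :
    ⁅x * z, y⁆ = ⁅x, y⁆ * ⁅z, y⁆ := by
  have hc : ∀ w : G, ⁅x, y⁆ * w = w * ⁅x, y⁆ := fun w =>
    (Subgroup.mem_center_iff.mp (hG (Subgroup.commutator_mem_commutator
      (Subgroup.mem_top x) (Subgroup.mem_top y))) w).symm
  have hc' : ∀ w : G, ⁅z, y⁆ * w = w * ⁅z, y⁆ := fun w =>
    (Subgroup.mem_center_iff.mp (hG (Subgroup.commutator_mem_commutator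
      (Subgroup.mem_top z) (Subgroup.mem_top y))) w).symm
  have h : ⁅x * z, y⁆ = x * ⁅z, y⁆ * x⁻¹ * ⁅x, y⁆ := by
    simp only [commutatorElement_def]; group
  rw [h, ← hc' x, mul_assoc ⁅z, y⁆, mul_inv_cancel, mul_one, hc']

lemma comm_zpow_left (hG : commutator G ≤ Subgroup.center G) (x y : G) (n : ℤ) :
    ⁅x ^ n, y⁆ = ⁅x, y⁆ ^ n :=
  (MonoidHom.mk' (fun x => ⁅x, y⁆) (comm_mul_left hG y)).map_zpow x n

lemma comm_zpow_right (hG : commutator G ≤ Subgroup.center G) (x y : G) (n : ℤ) :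
    ⁅x, y ^ n⁆ = ⁅x, y⁆ ^ n := by
  rw [← commutatorElement_inv (y ^ n) x, comm_zpow_left hG, ← inv_zpow,
    commutatorElement_inv]

end Aux

/-- Necessity: if a weak amalgam of `A` and `B` over `D` exists in the class of
nilpotent groups of class at most two, and `D` is co-central in `B`, then
condition (**) holds. -/
theorem maier_satz2_corrected_necessity
    {A B D : Type u} [Group A] [Group B] [Group D]
    (hA : commutator A ≤ Subgroup.center A)
    (hB : commutator B ≤ Subgroup.center B)
    (ι : D →* A) (κ : D →* B)
    (hι : Function.Injective ι) (hκ : Function.Injective κ)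
    (hcocentral : κ.range ⊔ Subgroup.center B = ⊤)
    (hamalgam : ∃ (G : Type u) (_ : Group G) (f : A →* G) (g : B →* G),
        commutator G ≤ Subgroup.center G ∧
        Function.Injective f ∧ Function.Injective g ∧
        f.comp ι = g.comp κ) :
    ∀ q : ℤ, 0 < q → ∀ a : A, a ^ q ∈ commutator A ⊔ ι.range →
      ∀ z : B, z ∈ Subgroup.center B → ∀ d : D, κ d = z ^ q → ⁅a, ι d⁆ = 1 := by
  obtain ⟨G, _, f, g, hG, hf, hg, hfg⟩ := hamalgam
  intro q _ a ha z hz d hd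
  have hfι : ∀ x : D, f (ι x) = g (κ x) := fun x => DFunLike.congr_fun hfg x
  -- f (a ^ q) commutes with g z
  have hcomm : Commute (f (a ^ q)) (g z) := by
    have hsub : commutator A ⊔ ι.range ≤
        (Subgroup.centralizer {g z}).comap f := by
      apply sup_le
      · intro x hx
        have hfx : f x ∈ commutator G := by
          have : f x ∈ Subgroup.map f (commutator A) := ⟨x, hx, rfl⟩
          rw [commutator_def, Subgroup.map_commutator] at this
          exact Subgroup.commutator_mono le_top le_top this
        simp only [Subgroup.mem_comap, Subgroup.mem_centralizer_iff,
          Set.mem_singleton_iff, forall_eq]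
        exact Subgroup.mem_center_iff.mp (hG hfx) (g z)
      · rintro _ ⟨x, rfl⟩
        simp only [Subgroup.mem_comap, Subgroup.mem_centralizer_iff,
          Set.mem_singleton_iff, forall_eq]
        rw [hfι x, ← map_mul, ← map_mul,
          Subgroup.mem_center_iff.mp hz (κ x)]
    have := hsub ha
    simp only [Subgroup.mem_comap, Subgroup.mem_centralizer_iff,
      Set.mem_singleton_iff, forall_eq] at this
    exact Commute.symm this
  apply hf
  rw [map_commutatorElement, map_one, hfι d, hd, map_zpow,
    comm_zpow_right hG, ← comm_zpow_left hG, ← map_zpow]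
  exact hcomm.commutator_eq
end

section
/- Let A and B be nilpotent groups of class at most two, and let D be a common subgroup of A and B (given by injective homomorphisms ι : D → A and κ : D → B) with D co-central in B. Then: (i) every element of D whose image under ι lies in the commutator subgroup [A,A] has its image under κ contained in the center Z(B); and (ii) every element of D whose image under κ lies in the commutator subgroup [B,B] has its image under ι contained in the center Z(A). -/
open scoped commutatorElement

private theorem comm_aux {B D : Type*} [Group B] [Group D]
    (hB : commutator B ≤ Subgroup.center B) (κ : D →* B)
    (hco : κ.range ⊔ Subgroup.center B = ⊤) :
    commutator B ≤ (commutator D).map κ := by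
  have hc : ∀ x y : B, ⁅x, y⁆ ∈ Subgroup.center B := fun x y =>
    hB (Subgroup.commutator_mem_commutator (Subgroup.mem_top x) (Subgroup.mem_top y))
  have hconj : ∀ c ∈ Subgroup.center B, ∀ g : B, g * c * g⁻¹ = c := by
    intro c hc g
    rw [Subgroup.mem_center_iff.mp hc g, mul_assoc, mul_inv_cancel, mul_one]
  have hmull : ∀ x y z : B, ⁅x * y, z⁆ = ⁅y, z⁆ * ⁅x, z⁆ := by
    intro x y z
    have h1 : ⁅x * y, z⁆ = x * ⁅y, z⁆ * x⁻¹ * ⁅x, z⁆ := by group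
    rw [h1, hconj _ (hc y z) x]
  have hmulr : ∀ x y z : B, ⁅x, y * z⁆ = ⁅x, z⁆ * ⁅x, y⁆ := by
    intro x y z
    have h1 : ⁅x, y * z⁆ = ⁅x, y⁆ * (y * ⁅x, z⁆ * y⁻¹) := by group
    rw [h1, hconj _ (hc x z) y, Subgroup.mem_center_iff.mp (hc x z) ⁅x, y⁆]
  have hinv : ∀ x y : B, ⁅x⁻¹, y⁆ = ⁅x, y⁆⁻¹ := by
    intro x y
    have h1 : ⁅x⁻¹, y⁆ = x⁻¹ * ⁅x, y⁆⁻¹ * x := by group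
    rw [h1]
    simpa using hconj _ (Subgroup.inv_mem _ (hc x y)) x⁻¹
  have hinvr : ∀ x y : B, ⁅x, y⁻¹⁆ = ⁅x, y⁆⁻¹ := by
    intro x y
    have h1 : ⁅x, y⁻¹⁆ = y⁻¹ * ⁅x, y⁆⁻¹ * y := by group
    rw [h1]
    simpa using hconj _ (Subgroup.inv_mem _ (hc x y)) y⁻¹
  set M := (commutator D).map κ with hM
  rw [commutator_def, Subgroup.commutator_le]
  intro x hx y hy
  have hmem : ∀ g : B, g ∈ Subgroup.closure ((κ.range : Set B) ∪ (Subgroup.center B : Set B)) := by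
    intro g
    rw [← Subgroup.sup_eq_closure, hco]
    trivial
  have hcent1 : ∀ x y : B, x ∈ Subgroup.center B → ⁅x, y⁆ ∈ M := by
    intro x y hx
    have : ⁅x, y⁆ = 1 :=
      commutatorElement_eq_one_iff_mul_comm.mpr (Subgroup.mem_center_iff.mp hx y).symm
    rw [this]; exact one_mem M
  have hcent2 : ∀ x y : B, y ∈ Subgroup.center B → ⁅x, y⁆ ∈ M := by
    intro x y hy
    have : ⁅x, y⁆ = 1 :=
      commutatorElement_eq_one_iff_mul_comm.mpr (Subgroup.mem_center_iff.mp hy x)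
    rw [this]; exact one_mem M
  refine Subgroup.closure_induction₂ (p := fun x y _ _ => ⁅x, y⁆ ∈ M)
    ?_ ?_ ?_ ?_ ?_ ?_ ?_ (hmem x) (hmem y)
  · rintro x y (⟨a, rfl⟩ | hx) hy
    · rcases hy with ⟨b, rfl⟩ | hy
      · have : ⁅κ a, κ b⁆ = κ ⁅a, b⁆ := (map_commutatorElement κ a b).symm
        rw [this]
        exact ⟨⁅a, b⁆, Subgroup.commutator_mem_commutator (Subgroup.mem_top a)
          (Subgroup.mem_top b), rfl⟩
      · exact hcent2 _ _ hy
    · exact hcent1 _ _ hx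
  · intro x _; simpa using one_mem M
  · intro x _; simpa using one_mem M
  · intro x y z _ _ _ h1 h2
    rw [hmull]; exact mul_mem h2 h1
  · intro y z x _ _ _ h1 h2
    rw [hmulr]; exact mul_mem h2 h1
  · intro x y _ _ h
    rw [hinv]; exact inv_mem h
  · intro x y _ _ h
    rw [hinvr]; exact inv_mem h

/-- If `A` and `B` are nilpotent of class at most two, `D` is a common subgroup, and
`D` is co-central in `B`, then condition (a) of Maier's Korollar 3 holds:
`[A,A] ∩ D ≤ Z(B)` and `[B,B] ∩ D ≤ Z(A)`. -/
theorem cocentral_condition_a {A B D : Type*} [Group A] [Group B] [Group D]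
    (hA : commutator A ≤ Subgroup.center A)
    (hB : commutator B ≤ Subgroup.center B)
    (ι : D →* A) (κ : D →* B)
    (hι : Function.Injective ι) (hκ : Function.Injective κ)
    (hcocentral : κ.range ⊔ Subgroup.center B = ⊤) :
    (∀ d : D, ι d ∈ commutator A → κ d ∈ Subgroup.center B) ∧
    (∀ d : D, κ d ∈ commutator B → ι d ∈ Subgroup.center A) := by
  constructor
  · intro d hd
    have hdA : ι d ∈ Subgroup.center A := hA hd
    rw [Subgroup.mem_center_iff]
    intro g
    have hmem : g ∈ Subgroup.closure ((κ.range : Set B) ∪ (Subgroup.center B : Set B)) := by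
      rw [← Subgroup.sup_eq_closure, hcocentral]; trivial
    refine Subgroup.closure_induction (p := fun g _ => g * κ d = κ d * g)
      ?_ ?_ ?_ ?_ hmem
    · rintro x (⟨e, rfl⟩ | hx)
      · have : ι e * ι d = ι d * ι e := Subgroup.mem_center_iff.mp hdA (ι e)
        rw [← map_mul, ← map_mul] at this
        have : e * d = d * e := hι this
        rw [← map_mul, ← map_mul, this]
      · exact (Subgroup.mem_center_iff.mp hx (κ d)).symm
    · exact (one_mul _).trans (mul_one _).symm
    · intro x y _ _ hx hy
      rw [mul_assoc, hy, ← mul_assoc, hx, mul_assoc]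
    · intro x _ hx
      have : Commute (κ d) x := hx.symm
      exact (this.inv_right).symm
  · intro d hd
    obtain ⟨e, he, heq⟩ := comm_aux hB κ hcocentral hd
    rw [hκ heq] at he
    apply hA
    rw [commutator_def] at he ⊢
    have : ι d ∈ Subgroup.map ι ⁅(⊤ : Subgroup D), ⊤⁆ := ⟨d, he, rfl⟩
    rw [Subgroup.map_commutator] at this
    exact Subgroup.commutator_mono le_top le_top this
end

section
/- There exist nilpotent groups A and B of class at most two, a group D with injective homomorphisms ι : D → A and κ : D → B, such that: D is co-central in B (B is generated by κ(D) and Z(B)); there exists a nilpotent group G of class at most two with injective homomorphisms f : A → G and g : B → G satisfying f ∘ ι = g ∘ κ; and yet there exist an integer q > 0, an element a ∈ A with a^q in the subgroup generated by [A,A] and ι(D), an element b ∈ B with b ∉ κ(D), and d ∈ D with κ(d) = b^q, such that ⁅a, ι(d)⁆ ≠ 1 in A. (Hence condition (*) of Maier's Satz 2, Part 1, is not necessary for the existence of a weak amalgam.) -/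
open scoped commutatorElement


set_option maxHeartbeats 2000000
set_option maxRecDepth 100000

def MA : Type := ZMod 4 × ZMod 4 × ZMod 4
instance : DecidableEq MA := inferInstanceAs (DecidableEq (ZMod 4 × ZMod 4 × ZMod 4))
instance : Fintype MA := inferInstanceAs (Fintype (ZMod 4 × ZMod 4 × ZMod 4))
instance : Group MA where
  mul u v := (u.1 + v.1, u.2.1 + v.2.1, u.2.2 + v.2.2 + u.1 * v.2.1)
  one := ((0 : ZMod 4), (0 : ZMod 4), (0 : ZMod 4))
  inv u := (-u.1, -u.2.1, -u.2.2 + u.1 * u.2.1)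
  mul_assoc := by
    rintro ⟨a1, a2, a3⟩ ⟨b1, b2, b3⟩ ⟨c1, c2, c3⟩
    refine Prod.ext ?_ (Prod.ext ?_ ?_)
    · show (a1 + b1) + c1 = a1 + (b1 + c1); ring
    · show (a2 + b2) + c2 = a2 + (b2 + c2); ring
    · show (a3 + b3 + a1 * b2) + c3 + (a1 + b1) * c2
        = a3 + (b3 + c3 + b1 * c2) + a1 * (b2 + c2); ring
  one_mul := by decide
  mul_one := by decide
  inv_mul_cancel := by decide

/-- embedding ZMod 2 → ZMod 4, i ↦ 2i -/
def e2 : ZMod 2 → ZMod 4 := fun i => 2 * i.val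
/-- reduction ZMod 4 → ZMod 2 -/
def p2 : ZMod 4 → ZMod 2 := fun j => j.val

lemma e2_add : ∀ i i' : ZMod 2, e2 (i + i') = e2 i + e2 i' := by decide
lemma p2_add : ∀ j j' : ZMod 4, p2 (j + j') = p2 j + p2 j' := by decide

-- B : subgroup {(2i, j, l)} of MA, coords (i,j,l)
def MB : Type := ZMod 2 × ZMod 4 × ZMod 4
instance : DecidableEq MB := inferInstanceAs (DecidableEq (ZMod 2 × ZMod 4 × ZMod 4))
instance : Fintype MB := inferInstanceAs (Fintype (ZMod 2 × ZMod 4 × ZMod 4))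
instance : Group MB where
  mul u v := (u.1 + v.1, u.2.1 + v.2.1, u.2.2 + v.2.2 + e2 u.1 * v.2.1)
  one := ((0 : ZMod 2), (0 : ZMod 4), (0 : ZMod 4))
  inv u := (-u.1, -u.2.1, -u.2.2 + e2 u.1 * u.2.1)
  mul_assoc := by
    rintro ⟨a1, a2, a3⟩ ⟨b1, b2, b3⟩ ⟨c1, c2, c3⟩
    refine Prod.ext ?_ (Prod.ext ?_ ?_)
    · show (a1 + b1) + c1 = a1 + (b1 + c1); ring
    · show (a2 + b2) + c2 = a2 + (b2 + c2); ring
    · show (a3 + b3 + e2 a1 * b2) + c3 + e2 (a1 + b1) * c2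
        = a3 + (b3 + c3 + e2 b1 * c2) + e2 a1 * (b2 + c2)
      rw [e2_add]; ring
  one_mul := by decide
  mul_one := by decide
  inv_mul_cancel := by decide

-- D : subgroup {(2i, j, 2l)} of MA, coords (i,j,l)
def MD : Type := ZMod 2 × ZMod 4 × ZMod 2
instance : DecidableEq MD := inferInstanceAs (DecidableEq (ZMod 2 × ZMod 4 × ZMod 2))
instance : Fintype MD := inferInstanceAs (Fintype (ZMod 2 × ZMod 4 × ZMod 2))
instance : Group MD where
  mul u v := (u.1 + v.1, u.2.1 + v.2.1, u.2.2 + v.2.2 + u.1 * p2 v.2.1)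
  one := ((0 : ZMod 2), (0 : ZMod 4), (0 : ZMod 2))
  inv u := (-u.1, -u.2.1, -u.2.2 + u.1 * p2 u.2.1)
  mul_assoc := by
    rintro ⟨a1, a2, a3⟩ ⟨b1, b2, b3⟩ ⟨c1, c2, c3⟩
    refine Prod.ext ?_ (Prod.ext ?_ ?_)
    · show (a1 + b1) + c1 = a1 + (b1 + c1); ring
    · show (a2 + b2) + c2 = a2 + (b2 + c2); ring
    · show (a3 + b3 + a1 * p2 b2) + c3 + (a1 + b1) * p2 c2
        = a3 + (b3 + c3 + b1 * p2 c2) + a1 * p2 (b2 + c2)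
      rw [p2_add]; ring
  one_mul := by decide
  mul_one := by decide
  inv_mul_cancel := by decide

def iota : MD →* MA where
  toFun u := (e2 u.1, u.2.1, e2 u.2.2)
  map_one' := by unfold MA MD; decide
  map_mul' := by unfold MA MD; decide

def kappa : MD →* MB where
  toFun u := (u.1, u.2.1, e2 u.2.2)
  map_one' := by unfold MB MD; decide
  map_mul' := by unfold MB MD; decide

def gHom : MB →* MA where
  toFun u := (e2 u.1, u.2.1, u.2.2)
  map_one' := by unfold MA MB; decide
  map_mul' := by unfold MA MB; decide

lemma commA_form : ∀ g h : MA, (⁅g, h⁆).1 = 0 ∧ (⁅g, h⁆).2.1 = 0 := by decide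
lemma centralA : ∀ u k : MA, u.1 = 0 → u.2.1 = 0 → k * u = u * k := by decide
lemma commB_form : ∀ g h : MB, (⁅g, h⁆).1 = 0 ∧ (⁅g, h⁆).2.1 = 0 := by decide
lemma centralB : ∀ u k : MB, u.1 = 0 → u.2.1 = 0 → k * u = u * k := by decide

lemma commA_le : commutator MA ≤ Subgroup.center MA := by
  rw [commutator_def, Subgroup.commutator_le]
  intro g _ h _
  rw [Subgroup.mem_center_iff]
  intro k
  exact centralA _ k (commA_form g h).1 (commA_form g h).2

lemma commB_le : commutator MB ≤ Subgroup.center MB := by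
  rw [commutator_def, Subgroup.commutator_le]
  intro g _ h _
  rw [Subgroup.mem_center_iff]
  intro k
  exact centralB _ k (commB_form g h).1 (commB_form g h).2

def zB : ZMod 4 → MB := fun c => ((0 : ZMod 2), (0 : ZMod 4), c)

lemma decompB : ∀ x : MB, ∃ d : MD, ∃ c : ZMod 4, x = kappa d * zB c := by decide

lemma cosup : kappa.range ⊔ Subgroup.center MB = ⊤ := by
  rw [eq_top_iff]
  rintro x -
  obtain ⟨d, c, hx⟩ := decompB x
  rw [hx]
  refine Subgroup.mul_mem _ (Subgroup.mem_sup_left ⟨d, rfl⟩)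
    (Subgroup.mem_sup_right (Subgroup.mem_center_iff.mpr ?_))
  intro k
  exact centralB _ k rfl rfl

lemma inj_iota : ∀ x y : MD, iota x = iota y → x = y := by decide
lemma inj_kappa : ∀ x y : MD, kappa x = kappa y → x = y := by decide
lemma inj_g : ∀ x y : MB, gHom x = gHom y → x = y := by decide

def aa : MA := ((1 : ZMod 4), (0 : ZMod 4), (0 : ZMod 4))
def bb : MB := ((0 : ZMod 2), (1 : ZMod 4), (1 : ZMod 4))
def dd : MD := ((0 : ZMod 2), (2 : ZMod 4), (1 : ZMod 2))
def dd' : MD := ((1 : ZMod 2), (0 : ZMod 4), (0 : ZMod 2))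

lemma haq : aa ^ (2 : ℤ) = iota dd' := by decide
lemma hbq : kappa dd = bb ^ (2 : ℤ) := by decide
lemma hbnot : ∀ d0 : MD, kappa d0 ≠ bb := by decide
lemma hcomm_ne : ⁅aa, iota dd⁆ ≠ 1 := by decide


/-- Counterexample to Maier's Satz 2, Part 1: there are nilpotent groups `A`, `B` of
class at most two with a common subgroup `D` co-central in `B`, such that a weak
amalgam exists in the class of nilpotent groups of class at most two, yet
condition (*) of Satz 2 fails. -/
theorem maier_satz2_counterexample :
    ∃ (A : Type) (_ : Group A) (B : Type) (_ : Group B) (D : Type) (_ : Group D)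
      (ι : D →* A) (κ : D →* B),
      commutator A ≤ Subgroup.center A ∧
      commutator B ≤ Subgroup.center B ∧
      Function.Injective ι ∧ Function.Injective κ ∧
      κ.range ⊔ Subgroup.center B = ⊤ ∧
      (∃ (G : Type) (_ : Group G) (f : A →* G) (g : B →* G),
          commutator G ≤ Subgroup.center G ∧
          Function.Injective f ∧ Function.Injective g ∧
          f.comp ι = g.comp κ) ∧
      (∃ (q : ℤ) (a : A) (b : B) (d : D), 0 < q ∧
          a ^ q ∈ commutator A ⊔ ι.range ∧
          b ∉ κ.range ∧ κ d = b ^ q ∧ ⁅a, ι d⁆ ≠ 1) := by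
  refine ⟨MA, inferInstance, MB, inferInstance, MD, inferInstance, iota, kappa,
    commA_le, commB_le,
    fun {x y} h => inj_iota x y h,
    fun {x y} h => inj_kappa x y h,
    cosup,
    ⟨MA, inferInstance, MonoidHom.id MA, gHom, commA_le, Function.injective_id,
      fun {x y} h => inj_g x y h, MonoidHom.ext fun u => rfl⟩,
    ⟨2, aa, bb, dd, by norm_num, ?_, ?_, hbq, hcomm_ne⟩⟩
  · rw [haq]
    exact Subgroup.mem_sup_right ⟨dd', rfl⟩
  · rw [MonoidHom.mem_range]
    rintro ⟨d0, hd0⟩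
    exact hbnot d0 hd0
end
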